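/- arXiv:1002.4598 — 5 statements merged into one kernel-verified Lean document; each statement's English description precedes it below -/
import Mathlib

section
/- For a morphism α on {a,b}* defined by α(a) = a^p b and α(b) = a^{p'} b with p, p' ≥ 1 and |p − p'| = 1, and any binary word u: u = g^k for a primitive word g and integer k ≥ 1 if and only if α(u) = G^k where G = α(g) and G is primitive. -/
/-- `listPow h m` is the word `h` repeated `m` times. -/
def listPow (h : List Bool) (m : ℕ) : List Bool := (List.replicate m h).flatten

/-- A word is primitive if it is not `h^m` for any word `h` and integer `m ≥ 2`. -/
def Primitive (g : List Bool) : Prop := ∀ h m, 2 ≤ m → g ≠ listPow h m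

/-- The Sturmian morphism on letters: `a ↦ a^p b`, `b ↦ a^{p'} b`
(`a` is `false`, `b` is `true`). -/
def alphaMap (p p' : ℕ) : Bool → List Bool
  | false => List.replicate p false ++ [true]
  | true  => List.replicate p' false ++ [true]

/-- The Sturmian morphism extended to words. -/
def alpha (p p' : ℕ) (w : List Bool) : List Bool := w.flatMap (alphaMap p p')

/-- A valid parameter pair: `p, p' ≥ 1` and `|p − p'| = 1`. -/
def ValidPair (p p' : ℕ) : Prop := 1 ≤ p ∧ 1 ≤ p' ∧ (p = p' + 1 ∨ p' = p + 1)

/-- A finite binary word is balanced if any two equal-length factors have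
`b`-counts differing by at most 1. -/
def BalancedFin (w : List Bool) : Prop :=
  ∀ u v : List Bool, u <:+: w → v <:+: w → u.length = v.length →
    u.count true ≤ v.count true + 1

/-- The factor of the infinite word `w` of length `n` starting at position `i`. -/
def infFactorAt (w : ℕ → Bool) (i n : ℕ) : List Bool :=
  (List.range n).map (fun k => w (i + k))

/-- `u` is a factor of the infinite word `w`. -/
def InfFactor (u : List Bool) (w : ℕ → Bool) : Prop :=
  ∃ i, u = infFactorAt w i u.length

/-- An infinite binary word is balanced if any two equal-length factors have
`b`-counts differing by at most 1. -/
def BalancedInf (w : ℕ → Bool) : Prop :=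
  ∀ u v : List Bool, InfFactor u w → InfFactor v w → u.length = v.length →
    u.count true ≤ v.count true + 1

/-- Ultimately periodic infinite word. -/
def UltPeriodic (w : ℕ → Bool) : Prop :=
  ∃ N q, 1 ≤ q ∧ ∀ n, N ≤ n → w (n + q) = w n


lemma listPow_succ (g : List Bool) (m : ℕ) : listPow g (m+1) = g ++ listPow g m := by
  simp [listPow, List.replicate_succ]

lemma alpha_append (p p' : ℕ) (x y : List Bool) :
    alpha p p' (x ++ y) = alpha p p' x ++ alpha p p' y := by
  simp [alpha]

lemma alpha_listPow (p p' : ℕ) (g : List Bool) (m : ℕ) :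
    alpha p p' (listPow g m) = listPow (alpha p p' g) m := by
  induction m with
  | zero => simp [listPow, alpha]
  | succ n ih => rw [listPow_succ, listPow_succ, alpha_append, ih]

lemma aux_not_lt (q q' : ℕ) (X Y : List Bool)
    (h : List.replicate q false ++ true :: X = List.replicate q' false ++ true :: Y) :
    ¬ q < q' := by
  intro hlt
  have := congrArg (fun l => l[q]?) h
  rw [List.getElem?_append_right (by simp)] at this
  rw [List.getElem?_append] at this
  simp [hlt] at this

lemma block_cons (p p' : ℕ) (c : Bool) (L : List Bool) :
    alphaMap p p' c ++ L = List.replicate (cond c p' p) false ++ true :: L := by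
  cases c <;> simp [alphaMap]

lemma alpha_inj (p p' : ℕ) (hne : p ≠ p') : Function.Injective (alpha p p') := by
  intro u
  induction u with
  | nil =>
    intro v hv
    cases v with
    | nil => rfl
    | cons d t =>
      exfalso
      have := congrArg List.length hv
      simp [alpha, alphaMap] at this
      cases d <;> simp [alphaMap] at this <;> omega
  | cons c u ih =>
    intro v hv
    cases v with
    | nil =>
      exfalso
      have := congrArg List.length hv
      cases c <;> simp [alpha, alphaMap] at this
    | cons d t =>
      have hv' : alphaMap p p' c ++ alpha p p' u = alphaMap p p' d ++ alpha p p' t := by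
        simpa [alpha] using hv
      rw [block_cons, block_cons] at hv'
      have hcd : c = d := by
        cases c <;> cases d <;> first
          | rfl
          | (exfalso
             have h1 := aux_not_lt _ _ _ _ hv'
             have h2 := aux_not_lt _ _ _ _ hv'.symm
             simp at h1 h2
             omega)
      subst hcd
      have : alpha p p' u = alpha p p' t := by
        have := List.append_cancel_left hv'
        simpa using this
      rw [ih this]

lemma alpha_ne_nil (p p' : ℕ) (g : List Bool) (hg : g ≠ []) : alpha p p' g ≠ [] := by
  cases g with
  | nil => exact absurd rfl hg
  | cons c t =>
    intro hcon
    have := congrArg List.length hcon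
    cases c <;> simp [alpha, alphaMap] at this

lemma getLast?_alpha (p p' : ℕ) (g : List Bool) (hg : g ≠ []) :
    (alpha p p' g).getLast? = some true := by
  induction g with
  | nil => exact absurd rfl hg
  | cons c t ih =>
    by_cases ht : t = []
    · subst ht; cases c <;> simp [alpha, alphaMap]
    · have : alpha p p' (c :: t) = alphaMap p p' c ++ alpha p p' t := by simp [alpha]
      rw [this, List.getLast?_append_of_ne_nil _ (alpha_ne_nil p p' t ht)]
      exact ih ht

lemma decode (p p' : ℕ) (g : List Bool) : ∀ H T : List Bool,
    H ++ T = alpha p p' g → H.getLast? = some true →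
    ∃ h t, g = h ++ t ∧ H = alpha p p' h ∧ T = alpha p p' t := by
  induction g with
  | nil =>
    intro H T heq hlast
    have : H = [] := by
      have := congrArg List.length heq
      simp [alpha] at this
      exact this.1
    subst this; simp at hlast
  | cons c g' ih =>
    intro H T heq hlast
    have hHne : H ≠ [] := by intro hh; subst hh; simp at hlast
    set q : ℕ := (alphaMap p p' c).length - 1 with hq
    have hblock : alphaMap p p' c = List.replicate q false ++ [true] := by
      cases c <;> simp [alphaMap, hq]
    have heq' : H ++ T = (List.replicate q false ++ [true]) ++ alpha p p' g' := by
      rw [← hblock]; simpa [alpha] using heq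
    have hlen : q + 1 ≤ H.length := by
      by_contra hcon
      push_neg at hcon
      have hHle : H.length ≤ q := by omega
      have hrep : H = List.replicate H.length false := by
        have h2 := congrArg (List.take H.length) heq'
        rw [List.take_left] at h2
        rw [List.take_append_of_le_length (by simp; omega)] at h2
        rw [List.take_append_of_le_length (by simpa using hHle)] at h2
        simpa [Nat.min_eq_left hHle] using h2
      rw [hrep] at hlast
      have hpos : H.length ≠ 0 := by simpa using hHne
      rw [List.getLast?_replicate] at hlast
      simp [hpos] at hlast
    set H' : List Bool := H.drop (q + 1) with hH'
    have hHsplit : H = (List.replicate q false ++ [true]) ++ H' := by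
      have h1 : H.take (q+1) = List.replicate q false ++ [true] := by
        have h2 := congrArg (List.take (q+1)) heq'
        rw [List.take_append_of_le_length hlen, List.take_left' (by simp)] at h2
        exact h2
      conv_lhs => rw [← List.take_append_drop (q+1) H]
      rw [h1]
    have heq'' : H' ++ T = alpha p p' g' := by
      have := heq'
      rw [hHsplit, List.append_assoc] at this
      exact List.append_cancel_left this
    by_cases hH'nil : H' = []
    · refine ⟨[c], g', rfl, ?_, ?_⟩
      · rw [hHsplit, hH'nil]; simp [alpha, hblock]
      · rw [hH'nil] at heq''; simpa using heq''
    · have hlast' : H'.getLast? = some true := by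
        rw [hHsplit, List.getLast?_append_of_ne_nil _ hH'nil] at hlast
        exact hlast
      obtain ⟨h, t, hg', hH, hT⟩ := ih H' T heq'' hlast'
      refine ⟨c :: h, t, by simp [hg'], ?_, hT⟩
      rw [hHsplit, hH]; simp [alpha, hblock]

lemma listPow_ne_nil (H : List Bool) (m : ℕ) (hH : H ≠ []) (hm : 1 ≤ m) :
    listPow H m ≠ [] := by
  intro hcon
  have := congrArg List.length hcon
  simp [listPow] at this
  rcases this with h | h
  · omega
  · exact hH h

lemma getLast?_listPow (H : List Bool) (m : ℕ) (hH : H ≠ []) (hm : 1 ≤ m) :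
    (listPow H m).getLast? = H.getLast? := by
  induction m with
  | zero => omega
  | succ n ih =>
    rcases Nat.eq_zero_or_pos n with hn | hn
    · subst hn; simp [listPow]
    · rw [listPow_succ, List.getLast?_append_of_ne_nil _ (listPow_ne_nil H n hH hn)]
      exact ih hn

lemma not_primitive_nil : ¬ Primitive ([] : List Bool) := by
  intro hp
  exact hp [] 2 (le_refl 2) (by simp [listPow])

lemma primitive_alpha (p p' : ℕ) (hne : p ≠ p') (g : List Bool) (hg : Primitive g) :
    Primitive (alpha p p' g) := by
  intro H m hm heq
  have hgne : g ≠ [] := by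
    intro hnil; rw [hnil] at hg; exact not_primitive_nil hg
  have hane : alpha p p' g ≠ [] := alpha_ne_nil p p' g hgne
  have hHne : H ≠ [] := by
    intro hnil; rw [hnil] at heq
    exact hane (by simpa [listPow] using heq)
  have hHlast : H.getLast? = some true := by
    rw [← getLast?_listPow H m hHne (by omega), ← heq]
    exact getLast?_alpha p p' g hgne
  have hsplit : H ++ listPow H (m - 1) = alpha p p' g := by
    rw [← listPow_succ]
    have : m - 1 + 1 = m := by omega
    rw [this, ← heq]
  obtain ⟨h, t, hgsplit, hH, hT⟩ := decode p p' g H (listPow H (m-1)) hsplit hHlast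
  have : alpha p p' g = alpha p p' (listPow h m) := by
    rw [alpha_listPow, ← hH, ← heq]
  exact hg h m hm (alpha_inj p p' hne this)

theorem stmt0 (p p' : ℕ) (h : ValidPair p p') (u g : List Bool) (k : ℕ) (hk : 1 ≤ k) :
    (u = listPow g k ∧ Primitive g) ↔
      (alpha p p' u = listPow (alpha p p' g) k ∧ Primitive (alpha p p' g)) := by
  have hne : p ≠ p' := by rcases h with ⟨h1, h2, h3 | h3⟩ <;> omega
  constructor
  · rintro ⟨hu, hg⟩
    exact ⟨by rw [hu, alpha_listPow], primitive_alpha p p' hne g hg⟩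
  · rintro ⟨hu, hg⟩
    constructor
    · exact alpha_inj p p' hne (by rw [hu, alpha_listPow])
    · intro h' m hm hcon
      exact hg (alpha p p' h') m hm (by rw [hcon, alpha_listPow])
end

section
/- Let α be the morphism on {a,b}* with α(a) = a^p b and α(b) = a^{p'} b where p, p' ≥ 1 and |p − p'| = 1. Then α maps balanced words to balanced words: if u is balanced, so is α(u). -/
lemma count_true_alphaMap (p p' : ℕ) (w : Bool) : (alphaMap p p' w).count true = 1 := by
  cases w <;> simp [alphaMap, List.count_replicate]

lemma count_true_take_alphaMap (p p' : ℕ) (w : Bool) (j : ℕ)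
    (hj : j < (alphaMap p p' w).length) :
    ((alphaMap p p' w).take j).count true = 0 := by
  cases w <;>
  · simp only [alphaMap, List.length_append, List.length_replicate, List.length_singleton] at hj ⊢
    rw [List.take_append_of_le_length (by simp; omega)]
    simp [List.count_replicate]

lemma count_true_flatMap (p p' : ℕ) (v : List Bool) :
    (v.flatMap (alphaMap p p')).count true = v.length := by
  induction v with
  | nil => simp
  | cons a t ih => simp [List.count_append, ih, count_true_alphaMap]; omega

lemma count_false_add_count_true (v : List Bool) : v.count false + v.count true = v.length := by
  induction v with
  | nil => simp
  | cons a t ih => cases a <;> simp [ih] <;> omega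

lemma length_flatMap_alphaMap (p p' q : ℕ) (c : Bool)
    (hlen : ∀ w, (alphaMap p p' w).length = if w = c then q + 1 else q) (v : List Bool) :
    (v.flatMap (alphaMap p p')).length = q * v.length + v.count c := by
  induction v with
  | nil => simp
  | cons a t ih =>
    simp only [List.flatMap_cons, List.length_append, ih, hlen a, List.length_cons,
      List.count_cons]
    by_cases h : a = c <;> simp [h] <;> ring_nf <;> omega


/-- Length of the image of the `k`-prefix. -/
def Lf (p p' : ℕ) (u : List Bool) (k : ℕ) : ℕ := ((u.take k).flatMap (alphaMap p p')).length

lemma Lf_zero (p p' : ℕ) (u : List Bool) : Lf p p' u 0 = 0 := rfl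

lemma Lf_add (p p' : ℕ) (u : List Bool) (k d : ℕ) :
    Lf p p' u (k + d) = Lf p p' u k + (((u.drop k).take d).flatMap (alphaMap p p')).length := by
  simp [Lf, List.take_add, List.flatMap_append]

lemma Lf_mono (p p' : ℕ) (u : List Bool) {j k : ℕ} (h : j ≤ k) :
    Lf p p' u j ≤ Lf p p' u k := by
  obtain ⟨d, rfl⟩ := Nat.exists_eq_add_of_le h
  rw [Lf_add]; omega

lemma Lf_add_count (p p' q : ℕ) (c : Bool)
    (hlen : ∀ w, (alphaMap p p' w).length = if w = c then q + 1 else q)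
    (u : List Bool) (k d : ℕ) (h : k + d ≤ u.length) :
    Lf p p' u (k + d) = Lf p p' u k + q * d + ((u.drop k).take d).count c := by
  rw [Lf_add, length_flatMap_alphaMap p p' q c hlen]
  have : ((u.drop k).take d).length = d := by
    rw [List.length_take, List.length_drop]; omega
  rw [this]; omega

lemma take_alpha (p p' : ℕ) (u : List Bool) (k : ℕ) :
    (alpha p p' u).take (Lf p p' u k) = (u.take k).flatMap (alphaMap p p') := by
  have h : alpha p p' u = (u.take k).flatMap (alphaMap p p') ++ (u.drop k).flatMap (alphaMap p p') := by
    rw [alpha, ← List.flatMap_append, List.take_append_drop]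
  rw [h, Lf, List.take_left]

lemma drop_alpha (p p' : ℕ) (u : List Bool) (k : ℕ) :
    (alpha p p' u).drop (Lf p p' u k) = (u.drop k).flatMap (alphaMap p p') := by
  have h : alpha p p' u = (u.take k).flatMap (alphaMap p p') ++ (u.drop k).flatMap (alphaMap p p') := by
    rw [alpha, ← List.flatMap_append, List.take_append_drop]
  rw [h, Lf, List.drop_left]

/-- count of `true` among the first `s` letters of `alpha u`. -/
def Tf (p p' : ℕ) (u : List Bool) (s : ℕ) : ℕ := ((alpha p p' u).take s).count true

lemma Tf_L (p p' : ℕ) (u : List Bool) (k : ℕ) (hk : k ≤ u.length) :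
    Tf p p' u (Lf p p' u k) = k := by
  rw [Tf, take_alpha, count_true_flatMap, List.length_take]; omega

lemma Lf_lt_succ (p p' : ℕ) (u : List Bool) (k : ℕ) (hk : k < u.length) :
    Lf p p' u k < Lf p p' u (k + 1) := by
  rw [Lf_add]
  have h1 : (u.drop k).take 1 = [u[k]] := by
    rw [List.drop_eq_getElem_cons hk]; rfl
  rw [h1]
  have := count_true_alphaMap p p' u[k]
  have h2 : 1 ≤ (alphaMap p p' u[k]).length := by
    by_contra h
    simp only [not_le, Nat.lt_one_iff, List.length_eq_zero_iff] at h
    rw [h] at this; simp at this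
  simp only [List.flatMap_cons, List.flatMap_nil, List.append_nil]
  omega

lemma Tf_between (p p' : ℕ) (u : List Bool) (k s : ℕ) (hk : k < u.length)
    (h1 : Lf p p' u k ≤ s) (h2 : s < Lf p p' u (k + 1)) :
    Tf p p' u s = k := by
  have hs : s = Lf p p' u k + (s - Lf p p' u k) := by omega
  rw [Tf, hs, List.take_add, List.count_append]
  rw [← Tf] at *
  rw [Tf_L p p' u k (le_of_lt hk)]
  rw [drop_alpha, List.drop_eq_getElem_cons hk, List.flatMap_cons]
  have hlt : s - Lf p p' u k < (alphaMap p p' u[k]).length := by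
    have := Lf_add p p' u k 1
    have h1' : (u.drop k).take 1 = [u[k]] := by
      rw [List.drop_eq_getElem_cons hk]; rfl
    rw [h1'] at this
    simp only [List.flatMap_cons, List.flatMap_nil, List.append_nil] at this
    omega
  rw [List.take_append_of_le_length (le_of_lt hlt),
    count_true_take_alphaMap p p' _ _ hlt]
  omega

lemma exists_block (p p' : ℕ) (u : List Bool) (s : ℕ) (hs : s ≤ Lf p p' u u.length) :
    ∃ k, k ≤ u.length ∧ Lf p p' u k ≤ s ∧ Tf p p' u s = k ∧
      (k = u.length ∨ s < Lf p p' u (k + 1)) := by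
  obtain ⟨k, hkdef⟩ : ∃ k, k = Nat.findGreatest (fun j => Lf p p' u j ≤ s) u.length := ⟨_, rfl⟩
  have hk_le : k ≤ u.length := hkdef ▸ Nat.findGreatest_le u.length
  have hk_spec : Lf p p' u k ≤ s := by
    have := Nat.findGreatest_spec (P := fun j => Lf p p' u j ≤ s) (Nat.zero_le u.length)
      (by show Lf p p' u 0 ≤ s; rw [Lf_zero]; exact Nat.zero_le s)
    rw [hkdef]; exact this
  have hlast : k = u.length ∨ s < Lf p p' u (k + 1) := by
    rcases eq_or_lt_of_le hk_le with h | h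
    · exact Or.inl h
    · right
      by_contra hc
      push_neg at hc
      have hgt : Nat.findGreatest (fun j => Lf p p' u j ≤ s) u.length < k + 1 := by
        rw [← hkdef]; exact Nat.lt_succ_self k
      exact Nat.findGreatest_is_greatest hgt (by omega) hc
  refine ⟨k, hk_le, hk_spec, ?_, hlast⟩
  rcases eq_or_lt_of_le hk_le with h | h
  · have hse : s = Lf p p' u k := le_antisymm (by rw [h]; exact hs) hk_spec
    rw [hse, Tf_L p p' u k hk_le]
  · rcases hlast with h' | h'
    · omega
    · exact Tf_between p p' u k s h hk_spec h'


lemma window_count (W x pre suf : List Bool) (h : pre ++ x ++ suf = W) :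
    pre.length + x.length ≤ W.length ∧
    (W.take (pre.length + x.length)).count true
      = (W.take pre.length).count true + x.count true := by
  subst h
  constructor
  · simp [List.length_append]
  · rw [List.take_add, List.count_append]
    congr 1
    have hd : (pre ++ x ++ suf).drop pre.length = x ++ suf := by
      rw [List.append_assoc]; exact List.drop_left
    rw [hd, List.take_left]

lemma Lf_sat (p p' : ℕ) (u : List Bool) (k : ℕ) (h : u.length ≤ k) :
    Lf p p' u k = Lf p p' u u.length := by
  unfold Lf
  rw [List.take_of_length_le h, List.take_length]

theorem main_aux (p p' q : ℕ) (c : Bool) (hq : 2 ≤ q)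
    (hlen : ∀ w, (alphaMap p p' w).length = if w = c then q + 1 else q)
    (u : List Bool)
    (hbal : ∀ i j len, i + len ≤ u.length → j + len ≤ u.length →
       ((u.drop i).take len).count c ≤ ((u.drop j).take len).count c + 1) :
    BalancedFin (alpha p p' u) := by
  intro x y hx hy hxy
  obtain ⟨prex, sufx, hWx⟩ := hx
  obtain ⟨prey, sufy, hWy⟩ := hy
  set W := alpha p p' u with hW
  have hWlen : W.length = Lf p p' u u.length := by
    rw [hW, alpha, Lf, List.take_length]
  obtain ⟨hx_le, hx_cnt⟩ := window_count W x prex sufx hWx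
  obtain ⟨hy_le, hy_cnt⟩ := window_count W y prey sufy hWy
  set s := prex.length
  set s' := prey.length
  set n := x.length with hn
  set t1 := x.count true with ht1
  set t2 := y.count true with ht2
  by_contra hcon
  push_neg at hcon
  have ht12 : t2 + 2 ≤ t1 := hcon
  -- block positions
  obtain ⟨k0, hk0m, hk0le, hk0T, hk0d⟩ :=
    exists_block p p' u s (by omega)
  obtain ⟨k0', hk0'u.length, hk0'le, hk0'T, hk0'd⟩ :=
    exists_block p p' u (s + n) (by omega)
  obtain ⟨k1, hk1m, hk1le, hk1T, hk1d⟩ :=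
    exists_block p p' u s' (by omega)
  obtain ⟨k1', hk1'u.length, hk1'le, hk1'T, hk1'd⟩ :=
    exists_block p p' u (s' + n) (by omega)
  have hk0' : k0' = k0 + t1 := by
    have : Tf p p' u (s + n) = Tf p p' u s + t1 := hx_cnt
    omega
  have hk1' : k1' = k1 + t2 := by
    have : Tf p p' u (s' + n) = Tf p p' u s' + t2 := by
      rw [← hxy] at hy_cnt; exact hy_cnt
    omega
  subst hk0' hk1'
  -- x gives lower bound on n
  have hk0lt : k0 < u.length := by omega
  have hs1 : s + 1 ≤ Lf p p' u (k0 + 1) := by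
    rcases hk0d with h | h
    · omega
    · omega
  have hA : Lf p p' u (k0 + t2 + 2) = Lf p p' u (k0 + 1) + q * (t2 + 1)
      + ((u.drop (k0 + 1)).take (t2 + 1)).count c := by
    have := Lf_add_count p p' q c hlen u (k0 + 1) (t2 + 1) (by omega)
    convert this using 2 <;> omega
  set DA := ((u.drop (k0 + 1)).take (t2 + 1)).count c with hDA
  have hmonoA : Lf p p' u (k0 + t2 + 2) ≤ Lf p p' u (k0 + t1) :=
    Lf_mono p p' u (by omega)
  have hnlow : q * (t2 + 1) + DA + 1 ≤ n := by omega
  -- y gives upper bound on n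
  rcases hk1'd with hcase | hcase
  · -- k1 + t2 = u.length : word ends exactly
    have hB : Lf p p' u (k1 + t2) = Lf p p' u k1 + q * t2
        + ((u.drop k1).take t2).count c :=
      Lf_add_count p p' q c hlen u k1 t2 (by omega)
    set DB := ((u.drop k1).take t2).count c with hDB
    have hDA' : ((u.drop (k0 + 1)).take t2).count c ≤ DA := by
      have he : (u.drop (k0 + 1)).take t2 = ((u.drop (k0 + 1)).take (t2 + 1)).take t2 := by
        rw [List.take_take]; congr 1; omega
      rw [he, hDA]
      exact List.Sublist.count_le c (List.take_sublist _ _)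
    have hbal1 : DB ≤ ((u.drop (k0 + 1)).take t2).count c + 1 :=
      hbal k1 (k0 + 1) t2 (by omega) (by omega)
    have hql : q * (t2 + 1) = q * t2 + q := by ring
    have hend : Lf p p' u (k1 + t2) = Lf p p' u u.length := by rw [hcase]
    omega
  · -- s' + n < L (k1 + t2 + 1)
    have hk1t2m : k1 + t2 + 1 ≤ u.length := by
      by_contra hc2
      have he : k1 + t2 = u.length := by omega
      have : Lf p p' u (k1 + t2 + 1) = Lf p p' u u.length := Lf_sat p p' u _ (by omega)
      rw [he] at hk1'le
      omega
    have hB : Lf p p' u (k1 + t2 + 1) = Lf p p' u k1 + q * (t2 + 1)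
        + ((u.drop k1).take (t2 + 1)).count c :=
      Lf_add_count p p' q c hlen u k1 (t2 + 1) (by omega)
    set DB := ((u.drop k1).take (t2 + 1)).count c with hDB
    have hbal1 : DB ≤ DA + 1 := hbal k1 (k0 + 1) (t2 + 1) (by omega) (by omega)
    omega

lemma hbal_of_balanced (u : List Bool) (hu : BalancedFin u) (c : Bool) :
    ∀ i j len, i + len ≤ u.length → j + len ≤ u.length →
      ((u.drop i).take len).count c ≤ ((u.drop j).take len).count c + 1 := by
  intro i j len hi hj
  have hvi : (u.drop i).take len <:+: u :=
    (List.take_prefix len (u.drop i)).isInfix.trans (List.drop_suffix i u).isInfix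
  have hvj : (u.drop j).take len <:+: u :=
    (List.take_prefix len (u.drop j)).isInfix.trans (List.drop_suffix j u).isInfix
  have hli : ((u.drop i).take len).length = len := by
    rw [List.length_take, List.length_drop]; omega
  have hlj : ((u.drop j).take len).length = len := by
    rw [List.length_take, List.length_drop]; omega
  cases c
  · have h1 := hu _ _ hvj hvi (by omega)
    have h2 := count_false_add_count_true ((u.drop i).take len)
    have h3 := count_false_add_count_true ((u.drop j).take len)
    omega
  · exact hu _ _ hvi hvj (by omega)



/-- the Sturmian morphism maps balanced words to balanced words. -/
theorem stmt3 (p p' : ℕ) (h : ValidPair p p') (u : List Bool) (hu : BalancedFin u) :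
    BalancedFin (alpha p p' u) := by
  obtain ⟨hp, hp', hcase⟩ := h
  rcases hcase with h1 | h1
  · exact main_aux p p' (p' + 1) false (by omega)
      (fun w => by cases w <;> simp [alphaMap] <;> omega) u (hbal_of_balanced u hu false)
  · exact main_aux p p' (p + 1) true (by omega)
      (fun w => by cases w <;> simp [alphaMap] <;> omega) u (hbal_of_balanced u hu true)
end

section
/- Every Sturmian word over {a,b} contains, for every n ≥ 1, a factor of the form g^2 with |g| ≥ n; i.e., Sturmian words contain squares of arbitrarily long periods. -/
namespace SturmSq

lemma ifa_len (w : ℕ → Bool) (i n : ℕ) : (infFactorAt w i n).length = n := by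
  simp [infFactorAt]

lemma ifa_factor (w : ℕ → Bool) (i n : ℕ) : InfFactor (infFactorAt w i n) w :=
  ⟨i, by rw [ifa_len]⟩

lemma ifa_add (w : ℕ → Bool) (i m n : ℕ) :
    infFactorAt w i (m + n) = infFactorAt w i m ++ infFactorAt w (i + m) n := by
  simp only [infFactorAt, List.range_add, List.map_append, List.map_map]
  congr 1
  apply List.map_congr_left
  intro a _
  simp only [Function.comp]
  congr 1
  omega

lemma ifa_single (w : ℕ → Bool) (i : ℕ) : infFactorAt w i 1 = [w i] := by
  simp [infFactorAt, List.range_succ]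

lemma ifa_replicate {w : ℕ → Bool} {i n : ℕ} (h : ∀ d, d < n → w (i + d) = false) :
    infFactorAt w i n = List.replicate n false := by
  have h2 := List.eq_replicate_of_mem (a := false) (l := infFactorAt w i n) ?_
  · rwa [ifa_len] at h2
  · intro b hb
    simp only [infFactorAt, List.mem_map, List.mem_range] at hb
    obtain ⟨d, hd, hdb⟩ := hb
    rw [← hdb]; exact h d hd

lemma ifa_congr {x y : ℕ → Bool} {a b n : ℕ} (h : ∀ e, e < n → x (a + e) = y (b + e)) :
    infFactorAt x a n = infFactorAt y b n := by
  apply List.map_congr_left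
  intro e he
  exact h e (List.mem_range.mp he)

/-- count of trues in a window -/
def cnt (x : ℕ → Bool) (i L : ℕ) : ℕ := (infFactorAt x i L).count true

lemma cnt_le (x : ℕ → Bool) (i L : ℕ) : cnt x i L ≤ L := by
  have := (List.count_le_length : List.count true (infFactorAt x i L) ≤ _)
  rwa [ifa_len] at this

lemma cnt_add (x : ℕ → Bool) (i m n : ℕ) : cnt x i (m + n) = cnt x i m + cnt x (i + m) n := by
  simp [cnt, ifa_add, List.count_append]

lemma cnt_one_true {x : ℕ → Bool} {i : ℕ} (h : x i = true) : cnt x i 1 = 1 := by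
  simp [cnt, ifa_single, h]

lemma cnt_one_false {x : ℕ → Bool} {i : ℕ} (h : x i = false) : cnt x i 1 = 0 := by
  simp [cnt, ifa_single, h]

lemma cnt_congr {x : ℕ → Bool} {a b d : ℕ} (h : ∀ e, e < d → x (a + e) = x (b + e)) :
    cnt x a d = cnt x b d := by
  unfold cnt; rw [ifa_congr h]


/-- Coven–Hedlund style extraction: a minimal balance violation yields
`1z1` and `0z0` at positions `I`, `J`. -/
lemma ch (x : ℕ → Bool) (hviol : ∃ L I J, cnt x J L + 2 ≤ cnt x I L) :
    ∃ ℓ I J, x I = true ∧ x (I + 1 + ℓ) = true ∧ x J = false ∧ x (J + 1 + ℓ) = false ∧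
      ∀ d, d < ℓ → x (I + 1 + d) = x (J + 1 + d) := by
  classical
  have hP : ∃ L, ∃ I J, cnt x J L + 2 ≤ cnt x I L := hviol
  obtain ⟨I, J, hIJ⟩ := Nat.find_spec hP
  have hmin : ∀ L', L' < Nat.find hP → ∀ A B, cnt x A L' ≤ cnt x B L' + 1 := by
    intro L' hL' A B
    have h2 := Nat.find_min hP hL'
    push_neg at h2
    have := h2 A B
    omega
  have hL₀2 : 2 ≤ Nat.find hP := by
    have h1 := cnt_le x I (Nat.find hP)
    omega
  obtain ⟨ℓ, hsplit⟩ : ∃ ℓ, Nat.find hP = ℓ + 2 := ⟨Nat.find hP - 2, by omega⟩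
  rw [hsplit] at hIJ hmin
  clear hL₀2 hsplit
  have csplit : ∀ i, cnt x i (ℓ + 2) = cnt x i 1 + cnt x (i + 1) ℓ + cnt x (i + 1 + ℓ) 1 := by
    intro i
    have e : (ℓ : ℕ) + 2 = 1 + (ℓ + 1) := by omega
    rw [e, cnt_add, cnt_add]
    omega
  have csplitL : ∀ i, cnt x i (ℓ + 2) = cnt x i 1 + cnt x (i + 1) (ℓ + 1) := by
    intro i
    have e : (ℓ : ℕ) + 2 = 1 + (ℓ + 1) := by omega
    rw [e, cnt_add]
  have csplitR : ∀ i, cnt x i (ℓ + 2) = cnt x i (ℓ + 1) + cnt x (i + (ℓ + 1)) 1 := by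
    intro i
    have e : (ℓ : ℕ) + 2 = (ℓ + 1) + 1 := by omega
    rw [e, cnt_add]
  -- end letters
  have hI0 : x I = true := by
    by_contra hc
    have hxi : x I = false := by revert hc; cases x I <;> simp
    have h1 := csplitL I
    rw [cnt_one_false hxi] at h1
    have h2 := csplitL J
    have h3 := hmin (ℓ + 1) (by omega) (I + 1) (J + 1)
    omega
  have hJ0 : x J = false := by
    by_contra hc
    have hxj : x J = true := by revert hc; cases x J <;> simp
    have h1 := csplitL J
    rw [cnt_one_true hxj] at h1
    have h2 := csplitL I
    have h3 := hmin (ℓ + 1) (by omega) (I + 1) (J + 1)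
    have h4 := cnt_le x I 1
    omega
  have hIe : x (I + 1 + ℓ) = true := by
    by_contra hc
    have hxi : x (I + 1 + ℓ) = false := by revert hc; cases x (I + 1 + ℓ) <;> simp
    have h1 := csplitR I
    have e : I + (ℓ + 1) = I + 1 + ℓ := by omega
    rw [e, cnt_one_false hxi] at h1
    have h2 := csplitR J
    have h3 := hmin (ℓ + 1) (by omega) I J
    omega
  have hJe : x (J + 1 + ℓ) = false := by
    by_contra hc
    have hxj : x (J + 1 + ℓ) = true := by revert hc; cases x (J + 1 + ℓ) <;> simp
    have h1 := csplitR J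
    have e : J + (ℓ + 1) = J + 1 + ℓ := by omega
    rw [e, cnt_one_true hxj] at h1
    have h2 := csplitR I
    have h3 := hmin (ℓ + 1) (by omega) I J
    have h4 := cnt_le x (I + (ℓ + 1)) 1
    omega
  refine ⟨ℓ, I, J, hI0, hIe, hJ0, hJe, ?_⟩
  by_contra hne
  push_neg at hne
  have hne' : ∃ d, d < ℓ ∧ x (I + 1 + d) ≠ x (J + 1 + d) := hne
  obtain ⟨hd₀ℓ, hd₀ne⟩ := Nat.find_spec hne'
  have hpre : ∀ e, e < Nat.find hne' → x (I + 1 + e) = x (J + 1 + e) := by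
    intro e he
    have h2 := Nat.find_min hne' he
    by_contra hc
    exact h2 ⟨by omega, hc⟩
  obtain ⟨d₀, hd₀⟩ : ∃ d₀, Nat.find hne' = d₀ := ⟨_, rfl⟩
  rw [hd₀] at hd₀ℓ hd₀ne hpre
  have hs : cnt x (I + 1) d₀ = cnt x (J + 1) d₀ := cnt_congr hpre
  have csplit2 : ∀ i, cnt x i (d₀ + 2) = cnt x i 1 + cnt x (i + 1) d₀ + cnt x (i + 1 + d₀) 1 := by
    intro i
    have e : (d₀ : ℕ) + 2 = 1 + (d₀ + 1) := by omega
    rw [e, cnt_add, cnt_add]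
    omega
  cases hx : x (I + 1 + d₀) with
  | true =>
    have hy : x (J + 1 + d₀) = false := by
      cases hyy : x (J + 1 + d₀)
      · rfl
      · exact absurd (hx.trans hyy.symm) hd₀ne
    have h1 := csplit2 I
    have h2 := csplit2 J
    rw [cnt_one_true hI0, cnt_one_true hx] at h1
    rw [cnt_one_false hJ0, cnt_one_false hy] at h2
    have h3 := hmin (d₀ + 2) (by omega) I J
    omega
  | false =>
    have hy : x (J + 1 + d₀) = true := by
      cases hyy : x (J + 1 + d₀)
      · exact absurd (hx.trans hyy.symm) hd₀ne
      · rfl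
    have h1 := csplit2 I
    have h2 := csplit2 J
    rw [cnt_one_true hI0, cnt_one_false hx] at h1
    rw [cnt_one_false hJ0, cnt_one_true hy] at h2
    have e : (ℓ : ℕ) + 2 = (d₀ + 2) + (ℓ - d₀) := by omega
    have h4 : cnt x I (ℓ + 2) = cnt x I (d₀ + 2) + cnt x (I + (d₀ + 2)) (ℓ - d₀) := by
      rw [e, cnt_add]
    have h5 : cnt x J (ℓ + 2) = cnt x J (d₀ + 2) + cnt x (J + (d₀ + 2)) (ℓ - d₀) := by
      rw [e, cnt_add]
    have h6 := hmin (ℓ - d₀) (by omega) (I + (d₀ + 2)) (J + (d₀ + 2))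
    omega


section Core

variable (w : ℕ → Bool) (h : ∀ N, ∃ i, N ≤ i ∧ w i = true)

/-- positions of `true` in `w` (from the first one on). -/
def qs : ℕ → ℕ
  | 0 => Nat.find (h 0)
  | (i+1) => Nat.find (h (qs i + 1))

lemma qs_true (i : ℕ) : w (qs w h i) = true := by
  cases i with
  | zero => exact (Nat.find_spec (h 0)).2
  | succ n => exact (Nat.find_spec (h (qs w h n + 1))).2

lemma qs_lt (i : ℕ) : qs w h i < qs w h (i+1) := by
  have h1 := (Nat.find_spec (h (qs w h i + 1))).1
  show qs w h i < Nat.find (h (qs w h i + 1))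
  omega

lemma qs_between {i j : ℕ} (h1 : qs w h i < j) (h2 : j < qs w h (i+1)) : w j = false := by
  have h3 : ¬ (qs w h i + 1 ≤ j ∧ w j = true) := by
    apply Nat.find_min (h (qs w h i + 1))
    exact h2
  cases hw : w j
  · rfl
  · exact absurd ⟨by omega, hw⟩ h3

/-- the gap after the `i`-th true. -/
def gp (i : ℕ) : ℕ := qs w h (i+1) - qs w h i - 1

lemma qs_succ (i : ℕ) : qs w h (i+1) = qs w h i + gp w h i + 1 := by
  have := qs_lt w h i
  unfold gp
  omega

lemma qs_mono (L I : ℕ) : qs w h I ≤ qs w h (I + L) := by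
  induction L with
  | zero => simp
  | succ L ih =>
    have h1 := qs_lt w h (I + L)
    have e : I + (L + 1) = (I + L) + 1 := by omega
    rw [e]
    omega

lemma qs_ge (i : ℕ) : i ≤ qs w h i := by
  induction i with
  | zero => omega
  | succ n ih => have := qs_lt w h n; omega

lemma block_content (i : ℕ) :
    infFactorAt w (qs w h i) (gp w h i + 1) = true :: List.replicate (gp w h i) false := by
  have e : gp w h i + 1 = 1 + gp w h i := by omega
  rw [e, ifa_add, ifa_single, qs_true w h]
  rw [ifa_replicate (w := w) (i := qs w h i + 1) (n := gp w h i) ?_]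
  · rfl
  · intro d hd
    apply qs_between w h (i := i)
    · omega
    · rw [qs_succ]; omega

lemma gp_bound (hbal : BalancedInf w) (i j : ℕ) : gp w h i ≤ gp w h j + 1 := by
  by_contra hc
  push_neg at hc
  have hu : infFactorAt w (qs w h j) (gp w h j + 2) =
      true :: (List.replicate (gp w h j) false ++ [true]) := by
    have e : gp w h j + 2 = (gp w h j + 1) + 1 := by omega
    rw [e, ifa_add, block_content, ifa_single]
    have e2 : qs w h j + (gp w h j + 1) = qs w h (j+1) := by rw [qs_succ]; omega
    rw [e2, qs_true w h]
    rfl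
  have hv : infFactorAt w (qs w h i + 1) (gp w h j + 2) =
      List.replicate (gp w h j + 2) false := by
    apply ifa_replicate
    intro d hd
    apply qs_between w h (i := i)
    · omega
    · rw [qs_succ]; omega
  have hb := hbal (infFactorAt w (qs w h j) (gp w h j + 2))
    (infFactorAt w (qs w h i + 1) (gp w h j + 2))
    (ifa_factor _ _ _) (ifa_factor _ _ _) (by rw [ifa_len, ifa_len])
  rw [hu, hv] at hb
  simp [List.count_cons, List.count_append, List.count_replicate] at hb

variable (k : ℕ)

/-- the derived (gap) word. -/
def dw : ℕ → Bool := fun i => decide (gp w h i = k + 1)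

/-- the substitution. -/
def psi (b : Bool) : List Bool := true :: List.replicate (k + cond b 1 0) false

lemma psi_len (b : Bool) : (psi k b).length = k + cond b 1 0 + 1 := by
  simp [psi]

lemma gp_eq (hk : ∀ i, gp w h i = k ∨ gp w h i = k + 1) (i : ℕ) :
    gp w h i = k + cond (dw w h k i) 1 0 := by
  unfold dw
  rcases hk i with h1 | h1 <;> simp [h1]

lemma dw_true {i : ℕ} (hi : dw w h k i = true) : gp w h i = k + 1 := by
  simpa [dw] using hi

lemma dw_false (hk : ∀ i, gp w h i = k ∨ gp w h i = k + 1) {i : ℕ}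
    (hi : dw w h k i = false) : gp w h i = k := by
  have : ¬ (gp w h i = k + 1) := by simpa [dw] using hi
  rcases hk i with h1 | h1
  · exact h1
  · exact absurd h1 this

lemma W (hk : ∀ i, gp w h i = k ∨ gp w h i = k + 1) :
    ∀ L I, infFactorAt w (qs w h I) (qs w h (I + L) - qs w h I) =
      (infFactorAt (dw w h k) I L).flatMap (psi k) := by
  intro L
  induction L with
  | zero => simp [infFactorAt]
  | succ L ih =>
    intro I
    have e0 : I + (L + 1) = (I + L) + 1 := by omega
    have hmono := qs_mono w h L I
    have hsucc := qs_succ w h (I + L)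
    have e2 : qs w h (I + (L+1)) - qs w h I =
        (qs w h (I + L) - qs w h I) + (gp w h (I + L) + 1) := by
      rw [e0]; omega
    rw [e2, ifa_add, ih I]
    have e3 : qs w h I + (qs w h (I + L) - qs w h I) = qs w h (I + L) := by omega
    rw [e3, block_content]
    have e4 : infFactorAt (dw w h k) I (L + 1) =
        infFactorAt (dw w h k) I L ++ [dw w h k (I + L)] := by
      rw [ifa_add, ifa_single]
    rw [e4, List.flatMap_append]
    congr 1
    simp only [List.flatMap_cons, List.flatMap_nil, List.append_nil, psi]
    rw [gp_eq w h k hk (I + L)]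

lemma Wlen (hk : ∀ i, gp w h i = k ∨ gp w h i = k + 1) (L I : ℕ) :
    qs w h (I + L) - qs w h I = ((infFactorAt (dw w h k) I L).flatMap (psi k)).length := by
  have h1 := congrArg List.length (W w h k hk L I)
  rwa [ifa_len] at h1

lemma dw_bal (hbal : BalancedInf w) (hk : ∀ i, gp w h i = k ∨ gp w h i = k + 1) :
    BalancedInf (dw w h k) := by
  intro u v hu hv hlen
  by_contra hcon
  push_neg at hcon
  obtain ⟨i, hui⟩ := hu
  obtain ⟨j, hvj⟩ := hv
  have hviol : ∃ L I J, cnt (dw w h k) J L + 2 ≤ cnt (dw w h k) I L := by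
    refine ⟨u.length, i, j, ?_⟩
    have e1 : cnt (dw w h k) i u.length = u.count true := by rw [cnt, ← hui]
    have e2 : cnt (dw w h k) j u.length = v.count true := by rw [cnt, hlen, ← hvj]
    omega
  obtain ⟨ℓ, I, J, hI0, hIe, hJ0, hJe, hmid⟩ := ch (dw w h k) hviol
  -- gap values at the special positions
  have gpI : gp w h I = k + 1 := dw_true w h k hI0
  have gpIe : gp w h (I + 1 + ℓ) = k + 1 := dw_true w h k hIe
  have gpJ : gp w h J = k := dw_false w h k hk hJ0
  have gpJe : gp w h (J + 1 + ℓ) = k := dw_false w h k hk hJe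
  -- the common inner word
  set z := infFactorAt (dw w h k) (I + 1) ℓ with hzdef
  have hzJ : infFactorAt (dw w h k) (J + 1) ℓ = z := by
    rw [hzdef]
    exact ifa_congr (fun e he => (hmid e he).symm)
  set Z := z.flatMap (psi k) with hZdef
  have hSI : qs w h ((I + 1) + ℓ) - qs w h (I + 1) = Z.length := by
    rw [Wlen w h k hk ℓ (I + 1)]
  have hWI : infFactorAt w (qs w h (I + 1)) Z.length = Z := by
    rw [← hSI]
    exact W w h k hk ℓ (I + 1)
  have hSJ : qs w h ((J + 1) + ℓ) - qs w h (J + 1) = Z.length := by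
    rw [Wlen w h k hk ℓ (J + 1), hzJ]
  have hWJ : infFactorAt w (qs w h (J + 1)) Z.length = Z := by
    rw [← hSJ, W w h k hk ℓ (J + 1), hzJ]
  -- anchors
  have qI1 : qs w h (I + 1) = qs w h I + (k + 2) := by
    have := qs_succ w h I; omega
  have qIe2 : qs w h ((I + 1 + ℓ) + 1) = qs w h (I + 1 + ℓ) + (k + 2) := by
    have := qs_succ w h (I + 1 + ℓ); omega
  have qJ1 : qs w h (J + 1) = qs w h J + (k + 1) := by
    have := qs_succ w h J; omega
  have qJe2 : qs w h ((J + 1 + ℓ) + 1) = qs w h (J + 1 + ℓ) + (k + 1) := by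
    have := qs_succ w h (J + 1 + ℓ); omega
  have hmonoI : qs w h (I + 1) ≤ qs w h ((I + 1) + ℓ) := qs_mono w h ℓ (I + 1)
  have hmonoJ : qs w h (J + 1) ≤ qs w h ((J + 1) + ℓ) := qs_mono w h ℓ (J + 1)
  -- the factor F0 = 0^{k+1} Z 1 0^{k+1}  (at q I + 1)
  have hF0 : infFactorAt w (qs w h I + 1) ((k+1) + (Z.length + (1 + (k+1)))) =
      List.replicate (k+1) false ++ (Z ++ ([true] ++ List.replicate (k+1) false)) := by
    rw [ifa_add w (qs w h I + 1) (k+1) (Z.length + (1 + (k+1)))]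
    rw [ifa_add w (qs w h I + 1 + (k+1)) Z.length (1 + (k+1))]
    rw [ifa_add w (qs w h I + 1 + (k+1) + Z.length) 1 (k+1)]
    have p1 : infFactorAt w (qs w h I + 1) (k+1) = List.replicate (k+1) false := by
      apply ifa_replicate
      intro d hd
      apply qs_between w h (i := I) (by omega)
      rw [qs_succ, gpI]; omega
    have e1 : qs w h I + 1 + (k+1) = qs w h (I+1) := by omega
    have e2 : qs w h (I+1) + Z.length = qs w h ((I+1) + ℓ) := by omega
    rw [p1, e1, hWI, e2, ifa_single]
    have e3 : I + 1 + ℓ = (I + 1) + ℓ := by omega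
    rw [← e3, qs_true w h]
    have p4 : infFactorAt w (qs w h (I + 1 + ℓ) + 1) (k+1) = List.replicate (k+1) false := by
      apply ifa_replicate
      intro d hd
      apply qs_between w h (i := I + 1 + ℓ) (by omega)
      rw [qs_succ, gpIe]; omega
    rw [e3] at p4
    rw [p4]
  -- the factor F1 = 1 0^k Z 1 0^k 1  (at q J)
  have hF1 : infFactorAt w (qs w h J) (1 + (k + (Z.length + (1 + (k + 1))))) =
      [true] ++ (List.replicate k false ++ (Z ++ ([true] ++ (List.replicate k false ++ [true])))) := by
    rw [ifa_add w (qs w h J) 1 (k + (Z.length + (1 + (k + 1))))]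
    rw [ifa_add w (qs w h J + 1) k (Z.length + (1 + (k + 1)))]
    rw [ifa_add w (qs w h J + 1 + k) Z.length (1 + (k + 1))]
    rw [ifa_add w (qs w h J + 1 + k + Z.length) 1 (k + 1)]
    rw [ifa_add w (qs w h J + 1 + k + Z.length + 1) k 1]
    rw [ifa_single, qs_true w h]
    have p2 : infFactorAt w (qs w h J + 1) k = List.replicate k false := by
      apply ifa_replicate
      intro d hd
      apply qs_between w h (i := J) (by omega)
      rw [qs_succ, gpJ]; omega
    have e1 : qs w h J + 1 + k = qs w h (J+1) := by omega
    have e2 : qs w h (J+1) + Z.length = qs w h ((J+1) + ℓ) := by omega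
    rw [p2, e1, hWJ, e2, ifa_single]
    have e3 : J + 1 + ℓ = (J + 1) + ℓ := by omega
    rw [← e3, qs_true w h]
    have p5 : infFactorAt w (qs w h (J + 1 + ℓ) + 1) k = List.replicate k false := by
      apply ifa_replicate
      intro d hd
      apply qs_between w h (i := J + 1 + ℓ) (by omega)
      rw [qs_succ, gpJe]; omega
    have e4 : qs w h (J + 1 + ℓ) + 1 + k = qs w h ((J + 1 + ℓ) + 1) := by omega
    rw [e3] at p5 e4
    rw [p5, e4, ifa_single, qs_true w h]
  -- apply balance of w
  have hb := hbal (infFactorAt w (qs w h J) (1 + (k + (Z.length + (1 + (k + 1))))))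
    (infFactorAt w (qs w h I + 1) ((k+1) + (Z.length + (1 + (k+1)))))
    (ifa_factor _ _ _) (ifa_factor _ _ _)
    (by rw [ifa_len, ifa_len]; omega)
  rw [hF0, hF1] at hb
  simp [List.count_append, List.count_cons, List.count_replicate] at hb

lemma dw_aper (hap : ¬ UltPeriodic w) (hk : ∀ i, gp w h i = k ∨ gp w h i = k + 1) :
    ¬ UltPeriodic (dw w h k) := by
  rintro ⟨N, Q, hQ, hper⟩
  apply hap
  have hgap : ∀ i, N ≤ i → gp w h (i + Q) = gp w h i := by
    intro i hi
    have h1 := hper i hi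
    rw [gp_eq w h k hk (i + Q), gp_eq w h k hk i, h1]
  have hmonoNQ := qs_mono w h Q N
  refine ⟨qs w h N, qs w h (N + Q) - qs w h N, ?_, ?_⟩
  · have : qs w h N < qs w h (N + Q) := by
      obtain ⟨Q', rfl⟩ : ∃ Q', Q = Q' + 1 := ⟨Q - 1, by omega⟩
      have h1 := qs_mono w h Q' N
      have h2 := qs_lt w h (N + Q')
      have e : N + (Q' + 1) = (N + Q') + 1 := by omega
      rw [e]; omega
    omega
  · intro m hm
    -- shift property
    have hshift : ∀ t, qs w h (N + t + Q) = qs w h (N + t) + (qs w h (N + Q) - qs w h N) := by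
      intro t
      induction t with
      | zero => simp; omega
      | succ t ih =>
        have e1 : N + (t + 1) + Q = (N + t + Q) + 1 := by omega
        have e2 : N + (t + 1) = (N + t) + 1 := by omega
        rw [e1, e2, qs_succ, qs_succ, ih, hgap (N + t) (by omega)]
        omega
    -- locate m in a block
    have hloc : ∃ i, N ≤ i ∧ qs w h i ≤ m ∧ m < qs w h (i + 1) := by
      have hex : ∃ t, m < qs w h (N + t + 1) := by
        refine ⟨m + 1, ?_⟩
        have e : N + (m + 1) + 1 = N + m + 1 + 1 := by omega
        rw [e]
        have := qs_ge w h (N + m + 1 + 1)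
        omega
      classical
      obtain ⟨t₀, ht₀⟩ : ∃ t₀, Nat.find hex = t₀ := ⟨_, rfl⟩
      have hspec := Nat.find_spec hex
      rw [ht₀] at hspec
      refine ⟨N + t₀, by omega, ?_, by rw [show N + t₀ + 1 = N + (t₀ + 1) from rfl]; exact hspec⟩
      rcases Nat.eq_zero_or_pos t₀ with h0 | h0
      · rw [h0]; simpa [h0] using hm
      · have hmin := Nat.find_min hex (m := t₀ - 1) (by omega)
        push_neg at hmin
        have e : N + (t₀ - 1) + 1 = N + t₀ := by omega
        rw [e] at hmin
        exact hmin
    obtain ⟨i, hiN, him1, him2⟩ := hloc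
    set P := qs w h (N + Q) - qs w h N with hPdef
    have hsh1 : qs w h (i + Q) = qs w h i + P := by
      have := hshift (i - N)
      have e : N + (i - N) = i := by omega
      rw [e] at this
      exact this
    have hsh2 : qs w h ((i + 1) + Q) = qs w h (i + 1) + P := by
      have := hshift (i + 1 - N)
      have e : N + (i + 1 - N) = i + 1 := by omega
      rw [e] at this
      exact this
    rcases eq_or_lt_of_le him1 with heq | hlt
    · -- m = qs i : both true
      have h1 : w m = true := by rw [← heq]; exact qs_true w h i
      have h2 : w (m + P) = true := by
        have e : m + P = qs w h (i + Q) := by omega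
        rw [e]; exact qs_true w h (i + Q)
      rw [h1, h2]
    · -- strictly inside the gap: both false
      have h1 : w m = false := qs_between w h hlt him2
      have h2 : w (m + P) = false := by
        apply qs_between w h (i := i + Q)
        · omega
        · have e : (i + Q) + 1 = (i + 1) + Q := by omega
          rw [e]; omega
      rw [h1, h2]

lemma flatMap_psi_len (hk1 : 1 ≤ k) : ∀ g : List Bool, 2 * g.length ≤ (g.flatMap (psi k)).length := by
  intro g
  induction g with
  | nil => simp
  | cons b t ih =>
    rw [List.flatMap_cons, List.length_append, psi_len]
    simp only [List.length_cons]
    omega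

end Core

lemma core (w : ℕ → Bool) (hbal : BalancedInf w) (hap : ¬ UltPeriodic w)
    (hTT : ∀ p, ¬ (w p = true ∧ w (p+1) = true)) :
    ∃ w₁ : ℕ → Bool, BalancedInf w₁ ∧ ¬ UltPeriodic w₁ ∧
      ∀ g : List Bool, g ≠ [] → InfFactor (g ++ g) w₁ →
        ∃ hh : List Bool, 2 * g.length ≤ hh.length ∧ InfFactor (hh ++ hh) w := by
  classical
  have h : ∀ N, ∃ i, N ≤ i ∧ w i = true := by
    by_contra hc
    push_neg at hc
    obtain ⟨N, hN⟩ := hc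
    apply hap
    refine ⟨N, 1, le_refl 1, ?_⟩
    intro n hn
    have h1 : w n = false := by
      cases hw : w n
      · rfl
      · exact absurd hw (hN n hn)
    have h2 : w (n + 1) = false := by
      cases hw : w (n+1)
      · rfl
      · exact absurd hw (hN (n+1) (by omega))
    rw [h1, h2]
  -- the minimal gap
  have hkex : ∃ m, ∃ i, gp w h i = m := ⟨gp w h 0, 0, rfl⟩
  obtain ⟨i₀, hi₀⟩ := Nat.find_spec hkex
  obtain ⟨k, hkdef⟩ : ∃ k, Nat.find hkex = k := ⟨_, rfl⟩
  rw [hkdef] at hi₀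
  have hk : ∀ i, gp w h i = k ∨ gp w h i = k + 1 := by
    intro i
    have h1 : k ≤ gp w h i := by
      rw [← hkdef]
      exact Nat.find_min' hkex ⟨i, rfl⟩
    have h2 := gp_bound w h hbal i i₀
    omega
  have hk1 : 1 ≤ k := by
    by_contra hc
    have h0 : gp w h i₀ = 0 := by omega
    apply hTT (qs w h i₀)
    constructor
    · exact qs_true w h i₀
    · have e : qs w h i₀ + 1 = qs w h (i₀ + 1) := by
        rw [qs_succ, h0]
      rw [e]
      exact qs_true w h (i₀ + 1)
  refine ⟨dw w h k, dw_bal w h k hbal hk, dw_aper w h k hap hk, ?_⟩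
  intro g hg hgg
  obtain ⟨i, hgi⟩ := hgg
  rw [List.length_append] at hgi
  refine ⟨g.flatMap (psi k), flatMap_psi_len k hk1 g, ?_⟩
  have hW := W w h k hk (g.length + g.length) i
  rw [← hgi, List.flatMap_append] at hW
  have hlen2 := Wlen w h k hk (g.length + g.length) i
  rw [← hgi, List.flatMap_append, List.length_append] at hlen2
  refine ⟨qs w h i, ?_⟩
  rw [List.length_append]
  rw [show (g.flatMap (psi k)).length + (g.flatMap (psi k)).length =
    qs w h (i + (g.length + g.length)) - qs w h i from hlen2.symm]
  exact hW.symm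


lemma map_not_factor {u : List Bool} {w : ℕ → Bool}
    (hu : InfFactor u (fun i => !(w i))) : InfFactor (u.map (fun b => !b)) w := by
  obtain ⟨i, hi⟩ := hu
  refine ⟨i, ?_⟩
  rw [List.length_map, hi, ifa_len]
  simp [infFactorAt, List.map_map, Function.comp]

lemma count_map_not (u : List Bool) :
    (u.map (fun b => !b)).count true + u.count true = u.length := by
  induction u with
  | nil => simp
  | cons b t ih =>
    cases b <;> simp [List.count_cons] <;> omega

lemma neg_bal {w : ℕ → Bool} (hbal : BalancedInf w) : BalancedInf (fun i => !(w i)) := by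
  intro u v hu hv hlen
  have hu' := map_not_factor hu
  have hv' := map_not_factor hv
  have hb := hbal _ _ hv' hu' (by rw [List.length_map, List.length_map, hlen])
  have c1 := count_map_not u
  have c2 := count_map_not v
  have l1 := (List.count_le_length : List.count true u ≤ _)
  omega

lemma neg_aper {w : ℕ → Bool} (hap : ¬ UltPeriodic w) : ¬ UltPeriodic (fun i => !(w i)) := by
  rintro ⟨N, Q, hQ, hper⟩
  apply hap
  refine ⟨N, Q, hQ, ?_⟩
  intro n hn
  have := hper n hn
  simpa using this

lemma step (w : ℕ → Bool) (hbal : BalancedInf w) (hap : ¬ UltPeriodic w) :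
    ∃ w₁ : ℕ → Bool, BalancedInf w₁ ∧ ¬ UltPeriodic w₁ ∧
      ∀ g : List Bool, g ≠ [] → InfFactor (g ++ g) w₁ →
        ∃ hh : List Bool, 2 * g.length ≤ hh.length ∧ InfFactor (hh ++ hh) w := by
  by_cases hTT : ∃ p, w p = true ∧ w (p+1) = true
  · obtain ⟨p, hp1, hp2⟩ := hTT
    have h2win : ∀ (x : ℕ → Bool) (i : ℕ), infFactorAt x i 2 = [x i, x (i+1)] := by
      intro x i
      simp [infFactorAt, List.range_succ]
    have hnTT : ∀ r, ¬ ((fun i => !(w i)) r = true ∧ (fun i => !(w i)) (r+1) = true) := by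
      rintro r ⟨h1, h2⟩
      simp only [Bool.not_eq_true'] at h1 h2
      have hu : infFactorAt w p 2 = [true, true] := by rw [h2win, hp1, hp2]
      have hv : infFactorAt w r 2 = [false, false] := by rw [h2win, h1, h2]
      have hb := hbal (infFactorAt w p 2) (infFactorAt w r 2)
        (ifa_factor _ _ _) (ifa_factor _ _ _) (by rw [ifa_len, ifa_len])
      rw [hu, hv] at hb
      simp [List.count_cons] at hb
    obtain ⟨w₁, hb, ha, htr⟩ := core (fun i => !(w i)) (neg_bal hbal) (neg_aper hap) hnTT
    refine ⟨w₁, hb, ha, ?_⟩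
    intro g hg hgg
    obtain ⟨hh, hl, hf⟩ := htr g hg hgg
    refine ⟨hh.map (fun b => !b), by rw [List.length_map]; exact hl, ?_⟩
    have := map_not_factor hf
    rwa [List.map_append] at this
  · push_neg at hTT
    apply core w hbal hap
    intro p hp
    exact hTT p hp.1 hp.2

lemma base_sq (w : ℕ → Bool) : ∃ g : List Bool, 1 ≤ g.length ∧ InfFactor (g ++ g) w := by
  have h2win : ∀ i, infFactorAt w i 2 = [w i, w (i+1)] := by
    intro i
    simp [infFactorAt, List.range_succ]
  have h4win : infFactorAt w 0 4 = [w 0, w 1, w 2, w 3] := by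
    simp [infFactorAt, List.range_succ]
  by_cases e01 : w 0 = w 1
  · exact ⟨[w 0], by simp, 0, by simp [h2win 0, e01]⟩
  · by_cases e12 : w 1 = w 2
    · exact ⟨[w 1], by simp, 1, by simp [h2win 1, e12]⟩
    · by_cases e23 : w 2 = w 3
      · exact ⟨[w 2], by simp, 2, by simp [h2win 2, e23]⟩
      · have e20 : w 2 = w 0 := by
          cases h0 : w 0 <;> cases h1 : w 1 <;> cases h2 : w 2 <;> simp_all
        have e31 : w 3 = w 1 := by
          cases h1 : w 1 <;> cases h2 : w 2 <;> cases h3 : w 3 <;> simp_all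
        refine ⟨[w 0, w 1], by simp, 0, ?_⟩
        simp [h4win, e20, e31]

lemma main : ∀ n : ℕ, ∀ w : ℕ → Bool, BalancedInf w → ¬ UltPeriodic w →
    ∃ g : List Bool, n ≤ g.length ∧ InfFactor (g ++ g) w := by
  intro n
  induction n using Nat.strong_induction_on with
  | _ n ih =>
    intro w hbal hap
    by_cases hn : n ≤ 1
    · obtain ⟨g, hg, hf⟩ := base_sq w
      exact ⟨g, by omega, hf⟩
    · obtain ⟨w₁, hb, ha, htr⟩ := step w hbal hap
      obtain ⟨g, hg, hgf⟩ := ih ((n+1)/2) (by omega) w₁ hb ha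
      have hgne : g ≠ [] := by
        intro e
        rw [e] at hg
        simp at hg
        omega
      obtain ⟨hh, hl, hf⟩ := htr g hgne hgf
      exact ⟨hh, by omega, hf⟩

end SturmSq



/-- Sturmian (balanced aperiodic) words contain squares of
arbitrarily long periods. -/
theorem stmt5 (w : ℕ → Bool) (hbal : BalancedInf w) (hap : ¬ UltPeriodic w) :
    ∀ n : ℕ, 1 ≤ n → ∃ g : List Bool, n ≤ g.length ∧ InfFactor (g ++ g) w := by
  intro n _
  exact SturmSq.main n w hbal hap
end

section
/- Let u = g^k e be an occurrence of a repetition in a word S with period g, integer exponent k ≥ 2, and right extension e (a proper prefix of g with the next letter of S after g^k e differing from g[|e|+1]). Under the Sturmian morphism α (α(a) = a^p b, α(b) = a^{p'} b, p ≠ p', min{p,p'} = q): the image occurrence α(g)^k α(e) in α(S) extends on the right by exactly a^q, i.e., the right extension of the reflected repetition is α(e) a^q. -/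
lemma repl_prefix (a : Bool) {q m : ℕ} (h : q ≤ m) :
    List.replicate q a <+: List.replicate m a :=
  ⟨List.replicate (m - q) a, by rw [← List.replicate_add]; congr 1; omega⟩

lemma alphaMap_eq (p p' : ℕ) (x : Bool) :
    alphaMap p p' x = List.replicate (cond x p' p) false ++ [true] := by
  cases x <;> rfl

lemma getq (m q : ℕ) (hqm : q ≤ m) (rest : List Bool) :
    (List.replicate m false ++ [true] ++ rest)[q]? =
      if q = m then some true else some false := by
  rcases eq_or_lt_of_le hqm with h | h
  · subst h
    rw [List.append_assoc, List.getElem?_append_right (by simp)]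
    simp
  · rw [List.append_assoc, List.getElem?_append_left (by simpa using h)]
    simp [List.getElem?_replicate, h, h.ne]

lemma pref_q (p p' q : ℕ) (hqp : q ≤ p) (hqp' : q ≤ p') (x : Bool) (rest : List Bool) :
    List.replicate q false <+: alphaMap p p' x ++ rest := by
  rw [alphaMap_eq, List.append_assoc]
  exact (repl_prefix false (by cases x <;> simp <;> omega)).trans (List.prefix_append _ _)

/-- if e is the right extension of an occurrence of gᵏ in
S = c ++ gᵏ ++ d (e the longest common prefix of d and g, shorter than g),
then the right extension of the reflected repetition α(g)ᵏ in α(S) is exactly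
α(e) ++ a^q where q = min p p'. -/
theorem stmt12 (p p' : ℕ) (hp : 1 ≤ p) (hp' : 1 ≤ p')
    (hne : p = p' + 1 ∨ p' = p + 1) (q : ℕ) (hq : q = min p p')
    (S c g d e : List Bool) (k : ℕ) (hk : 2 ≤ k)
    (hS : S = c ++ listPow g k ++ d)
    (hed : e <+: d) (heg : e <+: g)
    (hlt : e.length < g.length) (hld : e.length < d.length)
    (hmax : d[e.length]? ≠ g[e.length]?) :
    (alpha p p' e ++ List.replicate q false) <+: alpha p p' d ∧
    (alpha p p' e ++ List.replicate q false) <+: alpha p p' g ∧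
    (alpha p p' d)[(alpha p p' e ++ List.replicate q false).length]? ≠
      (alpha p p' g)[(alpha p p' e ++ List.replicate q false).length]? := by
  obtain ⟨td, rfl⟩ := hed
  obtain ⟨tg, rfl⟩ := heg
  rcases td with _ | ⟨x, td⟩
  · simp at hld
  rcases tg with _ | ⟨y, tg⟩
  · simp at hlt
  have hqp : q ≤ p := by omega
  have hqp' : q ≤ p' := by omega
  have hdx : (e ++ x :: td)[e.length]? = some x := by
    rw [List.getElem?_append_right le_rfl]; simp
  have hgy : (e ++ y :: tg)[e.length]? = some y := by
    rw [List.getElem?_append_right le_rfl]; simp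
  have hxy : x ≠ y := fun h => hmax (by rw [hdx, hgy, h])
  have hAd : alpha p p' (e ++ x :: td)
      = alpha p p' e ++ (alphaMap p p' x ++ alpha p p' td) := by simp [alpha]
  have hAg : alpha p p' (e ++ y :: tg)
      = alpha p p' e ++ (alphaMap p p' y ++ alpha p p' tg) := by simp [alpha]
  have key : ∀ (z : Bool) (rest : List Bool),
      (alpha p p' e ++ (alphaMap p p' z ++ rest))[
        (alpha p p' e).length + q]?
        = if q = cond z p' p then some true else some false := by
    intro z rest
    rw [List.getElem?_append_right (by simp), alphaMap_eq]
    simp only [Nat.add_sub_cancel_left]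
    exact getq _ _ (by cases z <;> simpa) _
  refine ⟨?_, ?_, ?_⟩
  · rw [hAd]
    obtain ⟨t, ht⟩ := pref_q p p' q hqp hqp' x (alpha p p' td)
    exact ⟨t, by rw [List.append_assoc, ht]⟩
  · rw [hAg]
    obtain ⟨t, ht⟩ := pref_q p p' q hqp hqp' y (alpha p p' tg)
    exact ⟨t, by rw [List.append_assoc, ht]⟩
  · rw [hAd, hAg, List.length_append, List.length_replicate, key, key]
    have h1 : (q = p ∧ q ≠ p') ∨ (q ≠ p ∧ q = p') := by omega
    rcases x with _ | _ <;> rcases y with _ | _ <;> simp_all <;>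
      rcases h1 with ⟨h2, h3⟩ | ⟨h2, h3⟩ <;> simp [h2, h3] <;>
      rw [if_neg (by omega)] <;> simp
end

section
/- If g^2 is a factor of a balanced infinite binary word, then g^2 is itself balanced, and moreover every cyclic conjugate g' of g satisfies that g'^2 is a factor of some balanced word; in particular, the period of a square factor of a Sturmian word is a conjugate of a balanced primitive word. -/
lemma infFactorAt_length (w : ℕ → Bool) (i n : ℕ) : (infFactorAt w i n).length = n := by
  simp [infFactorAt]

lemma infFactorAt_append (w : ℕ → Bool) (i a b : ℕ) :
    infFactorAt w i (a + b) = infFactorAt w i a ++ infFactorAt w (i + a) b := by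
  apply List.ext_getElem <;> simp [infFactorAt]
  intro k hk
  rcases lt_or_ge k a with h | h
  · rw [List.getElem_append_left (by simpa using h)]
    simp
  · rw [List.getElem_append_right (by simpa using h)]
    simp only [List.getElem_map, List.getElem_range, List.length_map, List.length_range]
    congr 1
    omega

lemma infFactorAt_eq_take_drop (w : ℕ → Bool) (i n a m : ℕ) (h : a + m ≤ n) :
    infFactorAt w (i + a) m = ((infFactorAt w i n).drop a).take m := by
  apply List.ext_getElem
  · simp [infFactorAt]; omega
  · intro k h1 h2
    simp [infFactorAt]
    congr 1
    omega

lemma infFactor_of_infix {u v : List Bool} {w : ℕ → Bool} (h : u <:+: v)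
    (hv : InfFactor v w) : InfFactor u w := by
  obtain ⟨i, hi⟩ := hv
  obtain ⟨s, t, hst⟩ := h
  refine ⟨i + s.length, ?_⟩
  have hlen : s.length + u.length ≤ v.length := by
    rw [← hst]; simp only [List.length_append]; omega
  rw [infFactorAt_eq_take_drop w i v.length s.length u.length hlen, ← hi, ← hst]
  rw [List.append_assoc, List.drop_left, List.take_left]

lemma balancedFin_of_infFactor {v : List Bool} {w : ℕ → Bool} (hb : BalancedInf w)
    (hv : InfFactor v w) : BalancedFin v := fun u u' hu hu' hl =>
  hb u u' (infFactor_of_infix hu hv) (infFactor_of_infix hu' hv) hl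

section Periodic

variable (g : List Bool) (hn : 0 < g.length)

/-- The periodic infinite word with period `g`. -/
noncomputable def perWord : ℕ → Bool :=
  fun k => g[k % g.length]'(Nat.mod_lt _ hn)

lemma perWord_mod (a : ℕ) (k : ℕ) : perWord g hn (a + k) = perWord g hn (a % g.length + k) := by
  unfold perWord
  congr 1
  simp [Nat.add_mod]

lemma perWord_period (k : ℕ) : perWord g hn (k + g.length) = perWord g hn k := by
  unfold perWord
  congr 1
  simp [Nat.add_mod_right]

lemma infFactorAt_perWord_mod (a m : ℕ) :
    infFactorAt (perWord g hn) a m = infFactorAt (perWord g hn) (a % g.length) m := by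
  unfold infFactorAt
  apply List.map_congr_left
  intro k _
  exact perWord_mod g hn a k

lemma infFactorAt_perWord_zero : infFactorAt (perWord g hn) 0 g.length = g := by
  apply List.ext_getElem
  · simp [infFactorAt]
  · intro k h1 h2
    simp [infFactorAt, perWord]
    congr 1
    exact Nat.mod_eq_of_lt (by simpa [infFactorAt] using h1)

lemma infFactorAt_one (w : ℕ → Bool) (i : ℕ) : infFactorAt w i 1 = [w i] := by
  simp [infFactorAt, List.range_succ]

lemma count_full (a : ℕ) :
    (infFactorAt (perWord g hn) a g.length).count true = g.count true := by
  induction a with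
  | zero => rw [infFactorAt_perWord_zero]
  | succ a ih =>
    obtain ⟨m, hm⟩ : ∃ m, g.length = m + 1 := ⟨g.length - 1, by omega⟩
    rw [hm] at ih ⊢
    have h1 : infFactorAt (perWord g hn) a (m + 1)
        = infFactorAt (perWord g hn) a 1 ++ infFactorAt (perWord g hn) (a + 1) m := by
      rw [Nat.add_comm m 1]; exact infFactorAt_append _ a 1 m
    have h2 : infFactorAt (perWord g hn) (a + 1) (m + 1)
        = infFactorAt (perWord g hn) (a + 1) m ++ infFactorAt (perWord g hn) (a + 1 + m) 1 :=
      infFactorAt_append _ (a + 1) m 1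
    have h3 : perWord g hn (a + 1 + m) = perWord g hn a := by
      rw [show a + 1 + m = a + g.length by omega]
      exact perWord_period g hn a
    rw [h2, infFactorAt_one, h3, ← ih, h1, infFactorAt_one,
      List.count_append, List.count_append]
    exact Nat.add_comm _ _

lemma count_pow (q a : ℕ) :
    (infFactorAt (perWord g hn) a (q * g.length)).count true = q * g.count true := by
  induction q generalizing a with
  | zero => simp [infFactorAt]
  | succ q ih =>
    have : (q + 1) * g.length = g.length + q * g.length := by ring
    rw [this, infFactorAt_append, List.count_append, count_full, ih]
    ring

lemma infFactorAt_perWord_two : infFactorAt (perWord g hn) 0 (g.length + g.length) = g ++ g := by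
  rw [infFactorAt_append, infFactorAt_perWord_zero,
    infFactorAt_perWord_mod g hn (0 + g.length) g.length]
  simp only [Nat.zero_add, Nat.mod_self]
  rw [infFactorAt_perWord_zero]

lemma perWord_balanced (hbal2 : BalancedFin (g ++ g)) : BalancedInf (perWord g hn) := by
  intro u v hu hv hlen
  obtain ⟨i, hi⟩ := hu
  obtain ⟨j, hj⟩ := hv
  rw [hlen] at hi
  obtain ⟨Q, R, hR, hQR⟩ : ∃ Q R, R < g.length ∧ v.length = Q * g.length + R :=
    ⟨v.length / g.length, v.length % g.length, Nat.mod_lt _ hn,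
      by rw [Nat.mul_comm]; exact (Nat.div_add_mod _ _).symm⟩
  rw [hQR] at hi hj
  have key : ∀ a : ℕ, ∃ c : ℕ,
      (infFactorAt (perWord g hn) a (Q * g.length + R)).count true
        = Q * g.count true + c ∧
      ∃ z : List Bool, z <:+: g ++ g ∧ z.length = R ∧ z.count true = c := by
    intro a
    rw [infFactorAt_append, List.count_append, count_pow]
    refine ⟨_, rfl, ?_⟩
    have hblt : (a + Q * g.length) % g.length < g.length := Nat.mod_lt _ hn
    refine ⟨infFactorAt (perWord g hn) ((a + Q * g.length) % g.length) R, ?_,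
      infFactorAt_length _ _ _, ?_⟩
    · have heq : infFactorAt (perWord g hn) (0 + (a + Q * g.length) % g.length) R
          = ((infFactorAt (perWord g hn) 0 (g.length + g.length)).drop
              ((a + Q * g.length) % g.length)).take R :=
        infFactorAt_eq_take_drop _ 0 (g.length + g.length) _ R (by omega)
      rw [Nat.zero_add] at heq
      rw [heq, infFactorAt_perWord_two]
      exact (List.take_prefix _ _).isInfix.trans (List.drop_suffix _ _).isInfix
    · rw [← infFactorAt_perWord_mod g hn (a + Q * g.length) R]
  obtain ⟨c1, hc1, z1, hz1, hz1l, hz1c⟩ := key i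
  obtain ⟨c2, hc2, z2, hz2, hz2l, hz2c⟩ := key j
  have hb := hbal2 z1 z2 hz1 hz2 (by rw [hz1l, hz2l])
  rw [hi, hj, hc1, hc2]
  omega

end Periodic

/-- a square factor g² of a balanced infinite word is itself
balanced, and the square of every cyclic conjugate of g is a factor of some
balanced word. -/
theorem stmt16 (w : ℕ → Bool) (hbal : BalancedInf w) (g : List Bool)
    (hfac : InfFactor (g ++ g) w) :
    BalancedFin (g ++ g) ∧
    ∀ x y : List Bool, g = x ++ y →
      ∃ w' : List Bool, BalancedFin w' ∧ ((y ++ x) ++ (y ++ x)) <:+: w' := by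
  have hbal2 : BalancedFin (g ++ g) := balancedFin_of_infFactor hbal hfac
  refine ⟨hbal2, ?_⟩
  intro x y hxy
  by_cases hg : g.length = 0
  · have hgnil : g = [] := List.eq_nil_of_length_eq_zero hg
    rw [hgnil] at hxy
    obtain ⟨hx, hy⟩ := List.append_eq_nil_iff.mp hxy.symm
    refine ⟨[], ?_, ?_⟩
    · intro u v hu _ _
      rw [List.infix_nil.mp hu]
      simp
    · simp [hx, hy]
  · have hn : 0 < g.length := by omega
    have hpbal : BalancedInf (perWord g hn) := perWord_balanced g hn hbal2
    have h3 : infFactorAt (perWord g hn) 0 (g.length + g.length + g.length)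
        = g ++ g ++ g := by
      rw [infFactorAt_append, infFactorAt_perWord_two,
        infFactorAt_perWord_mod g hn (0 + (g.length + g.length)) g.length]
      simp only [Nat.zero_add, Nat.add_mod_right, Nat.mod_self]
      rw [infFactorAt_perWord_zero]
    have hfac3 : InfFactor (g ++ g ++ g) (perWord g hn) := by
      refine ⟨0, ?_⟩
      rw [show (g ++ g ++ g).length = g.length + g.length + g.length by simp; omega, h3]
    refine ⟨g ++ g ++ g, balancedFin_of_infFactor hpbal hfac3, x, y, ?_⟩
    subst hxy
    simp
end
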